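/- With A and J the n×n complex matrices defined in the context, for every t ∈ ℝ one has exp(t·A) = I − J + cos(t)·J + sin(t)·A, where I is the n×n identity matrix and exp denotes the matrix exponential. -/

import Mathlib

open Matrix

/-- With `A` and `J` the `n×n` complex matrices defined in the context
(block form with blocks of sizes `1` and `n-1`), for every `t ∈ ℝ` one has `exp(t·A) = I − J + cos(t)·J + sin(t)·A`. -/
theorem stmt_4 (n : ℕ) (hn : 2 ≤ n) (z : ℂ) (hz : z + starRingEnd ℂ z = 0)
    (v : Fin (n - 1) → ℂ) (hv : v ≠ 0)
    (hnorm : z * starRingEnd ℂ z + ∑ i, starRingEnd ℂ (v i) * v i = 1)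
    (A J : Matrix (Fin 1 ⊕ Fin (n - 1)) (Fin 1 ⊕ Fin (n - 1)) ℂ)
    (hA : A = Matrix.fromBlocks
      (Matrix.of fun _ _ => z)
      (Matrix.of fun _ j => -starRingEnd ℂ (v j))
      (Matrix.of fun i _ => v i)
      (Matrix.of fun i j =>
        -(v i * z * starRingEnd ℂ (v j)) / (∑ k, starRingEnd ℂ (v k) * v k)))
    (hJ : J = Matrix.fromBlocks 1 0 0
      (Matrix.of fun i j =>
        v i * starRingEnd ℂ (v j) / (∑ k, starRingEnd ℂ (v k) * v k))) :
    ∀ t : ℝ, NormedSpace.exp (t • A) = 1 - J + Real.cos t • J + Real.sin t • A := by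
  intro t
  set S : ℂ := ∑ k, starRingEnd ℂ (v k) * v k with hSdef
  have hS : S ≠ 0 := by
    obtain ⟨i, hi⟩ : ∃ i, v i ≠ 0 := by
      by_contra h; push_neg at h; exact hv (funext h)
    have hSr : S = ((∑ k, Complex.normSq (v k) : ℝ) : ℂ) := by
      rw [hSdef]; push_cast
      exact Finset.sum_congr rfl fun k _ => Complex.normSq_eq_conj_mul_self.symm ▸ rfl
    rw [hSr]
    have : 0 < ∑ k, Complex.normSq (v k) :=
      Finset.sum_pos' (fun k _ => Complex.normSq_nonneg _)
        ⟨i, Finset.mem_univ i, Complex.normSq_pos.mpr hi⟩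
    exact_mod_cast this.ne'
  have hz2 : z * z = S - 1 := by linear_combination z * hz - hnorm
  have key : ∀ c : ℂ, ∑ k, starRingEnd ℂ (v k) * v k * c = S * c := fun c => by
    rw [hSdef, Finset.sum_mul]
  -- A * A = -J
  have hA2 : A * A = -J := by
    rw [hA, hJ]
    ext i j
    rcases i with i | i <;> rcases j with j | j <;>
      simp only [Matrix.mul_apply, Matrix.fromBlocks_apply₁₁, Matrix.fromBlocks_apply₁₂,
        Matrix.fromBlocks_apply₂₁, Matrix.fromBlocks_apply₂₂, Matrix.neg_apply,
        Matrix.of_apply, Fintype.sum_sum_type, Fin.sum_univ_one, Matrix.one_apply,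
        Matrix.zero_apply]
    · have h1 : ∑ k, (-starRingEnd ℂ (v k)) * v k
          = -(S * 1) := by
        rw [← key 1, ← Finset.sum_neg_distrib]
        exact Finset.sum_congr rfl fun k _ => by ring
      rw [h1]
      simp only [Subsingleton.elim i j, if_true]
      linear_combination hz2
    · have h1 : ∑ k, (-starRingEnd ℂ (v k)) * (-(v k * z * starRingEnd ℂ (v j)) / S)
          = S * (z * starRingEnd ℂ (v j) / S) := by
        rw [← key (z * starRingEnd ℂ (v j) / S)]
        exact Finset.sum_congr rfl fun k _ => by ring
      rw [h1]; field_simp; ring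
    · have h1 : ∑ k, (-(v i * z * starRingEnd ℂ (v k)) / S) * v k
          = -(S * (v i * z / S)) := by
        rw [← key (v i * z / S), ← Finset.sum_neg_distrib]
        exact Finset.sum_congr rfl fun k _ => by ring
      rw [h1]; field_simp; ring
    · have h1 : ∑ k, (-(v i * z * starRingEnd ℂ (v k)) / S) * (-(v k * z * starRingEnd ℂ (v j)) / S)
          = S * (v i * z * z * starRingEnd ℂ (v j) / (S * S)) := by
        rw [← key (v i * z * z * starRingEnd ℂ (v j) / (S * S))]
        exact Finset.sum_congr rfl fun k _ => by ring
      rw [h1]; field_simp; linear_combination (v i * starRingEnd ℂ (v j)) * hz2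
  -- A * J = A
  have hAJ : A * J = A := by
    rw [hA, hJ]
    ext i j
    rcases i with i | i <;> rcases j with j | j <;>
      simp only [Matrix.mul_apply, Matrix.fromBlocks_apply₁₁, Matrix.fromBlocks_apply₁₂,
        Matrix.fromBlocks_apply₂₁, Matrix.fromBlocks_apply₂₂,
        Matrix.of_apply, Fintype.sum_sum_type, Fin.sum_univ_one, Matrix.one_apply,
        Matrix.zero_apply]
    · simp [Fin.eq_zero i, Fin.eq_zero j]
    · have h1 : ∑ k, (-starRingEnd ℂ (v k)) * (v k * starRingEnd ℂ (v j) / S)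
          = -(S * (starRingEnd ℂ (v j) / S)) := by
        rw [← key (starRingEnd ℂ (v j) / S), ← Finset.sum_neg_distrib]
        exact Finset.sum_congr rfl fun k _ => by ring
      rw [h1]; field_simp; ring
    · simp [Fin.eq_zero j]
    · have h1 : ∑ k, (-(v i * z * starRingEnd ℂ (v k)) / S) * (v k * starRingEnd ℂ (v j) / S)
          = -(S * (v i * z * starRingEnd ℂ (v j) / (S * S))) := by
        rw [← key (v i * z * starRingEnd ℂ (v j) / (S * S)), ← Finset.sum_neg_distrib]
        exact Finset.sum_congr rfl fun k _ => by ring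
      rw [h1]; field_simp; ring
  -- consequences
  have hJ' : J = -(A * A) := by rw [hA2, neg_neg]
  have hA3 : A * A * A = -A := by rw [mul_assoc, hA2, mul_neg, hAJ]
  have hJA : J * A = A := by rw [hJ', neg_mul, hA3, neg_neg]
  have hJJ : J * J = J := by
    nth_rewrite 1 [hJ']
    rw [neg_mul, mul_assoc, hAJ, hA2, neg_neg]
  -- powers
  have hpow_even : ∀ k : ℕ, A ^ (2 * (k + 1)) = ((-1 : ℝ) ^ (k + 1)) • J := by
    intro k
    induction k with
    | zero =>
      rw [show 2 * (0 + 1) = 2 from rfl, pow_two, hA2, pow_one, neg_one_smul]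
    | succ k ih =>
      have h2 : 2 * (k + 1 + 1) = 2 * (k + 1) + 2 := by ring
      rw [h2, pow_add, ih, pow_two, hA2, mul_neg, smul_mul_assoc, hJJ]
      module
  have hpow_odd : ∀ k : ℕ, A ^ (2 * k + 1) = ((-1 : ℝ) ^ k) • A := by
    intro k
    induction k with
    | zero => simp
    | succ k ih =>
      have h2 : 2 * (k + 1) + 1 = (2 * k + 1) + 2 := by ring
      rw [h2, pow_add, ih, pow_two, hA2, mul_neg, smul_mul_assoc, hAJ]
      module
  -- the series
  have hterm : ∀ m : ℕ, ((Nat.factorial m : ℝ)⁻¹) • (t • A) ^ m = (t ^ m * (Nat.factorial m : ℝ)⁻¹) • A ^ m := by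
    intro m
    rw [smul_pow, smul_smul, mul_comm]
  have he : HasSum (fun k : ℕ => ((Nat.factorial (2*k) : ℝ)⁻¹) • (t • A) ^ (2 * k))
      (Real.cos t • J + ((1 : Matrix (Fin 1 ⊕ Fin (n - 1)) (Fin 1 ⊕ Fin (n - 1)) ℂ) - J)) := by
    have hfe : (fun k : ℕ => ((Nat.factorial (2*k) : ℝ)⁻¹) • (t • A) ^ (2 * k))
        = fun k => ((-1 : ℝ) ^ k * t ^ (2 * k) / (Nat.factorial (2 * k) : ℝ)) • J
            + (if k = 0 then (1 : Matrix (Fin 1 ⊕ Fin (n - 1)) (Fin 1 ⊕ Fin (n - 1)) ℂ) - J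
               else 0) := by
      funext k
      rw [hterm]
      cases k with
      | zero => simp
      | succ k =>
        rw [hpow_even k, smul_smul]
        simp only [Nat.succ_ne_zero, if_false, add_zero]
        congr 1
        rw [div_eq_mul_inv]; ring
    rw [hfe]
    exact ((Real.hasSum_cos t).smul_const J).add (hasSum_ite_eq 0 _)
  have ho : HasSum (fun k : ℕ => ((Nat.factorial (2*k+1) : ℝ)⁻¹) • (t • A) ^ (2 * k + 1))
      (Real.sin t • A) := by
    have hfo : (fun k : ℕ => ((Nat.factorial (2*k+1) : ℝ)⁻¹) • (t • A) ^ (2 * k + 1))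
        = fun k => ((-1 : ℝ) ^ k * t ^ (2 * k + 1) / (Nat.factorial (2 * k + 1) : ℝ)) • A := by
      funext k
      rw [hterm, hpow_odd k, smul_smul]
      congr 1
      rw [div_eq_mul_inv]; ring
    rw [hfo]
    exact (Real.hasSum_sin t).smul_const A
  have htot : HasSum (fun m : ℕ => ((Nat.factorial m : ℝ)⁻¹) • (t • A) ^ m)
      ((Real.cos t • J + ((1 : Matrix (Fin 1 ⊕ Fin (n - 1)) (Fin 1 ⊕ Fin (n - 1)) ℂ) - J))
        + Real.sin t • A) := HasSum.even_add_odd he ho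
  have hexp : NormedSpace.exp (t • A)
      = ∑' m : ℕ, ((Nat.factorial m : ℝ)⁻¹) • (t • A) ^ m := by
    rw [NormedSpace.exp_eq_tsum (𝕂 := ℝ)]
  rw [hexp, htot.tsum_eq]
  abel
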